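/- Over the product of Grassmannians G(k, k+i) × G(i, m-n+k+i), the integral of c_top(S_1^∨ ⊗ S_2) · c_top(Q_1^∨ ⊗ Q_2) equals the integral of c(S_1^∨ ⊗ Q_2)^{-1} · c(Q_1^∨ ⊗ S_2)^{-1}, where S_l, Q_l (l=1,2) are the universal subbundles and quotient bundles of the two factors. -/

import Mathlib

open MvPolynomial Finset

/-! Chern classes on a product of Grassmannians `G(p, p+q) × G(p', p'+q')` are modeled
via the splitting principle: the Chow ring is generated by the Chern roots of the
universal subbundles and quotient bundles, which we take as the variables of the
polynomial ring `ℤ[(Fin p ⊕ Fin q) ⊕ (Fin p' ⊕ Fin q')]` (first block: roots of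
`S₁, Q₁`; second block: roots of `S₂, Q₂`).  Integration over the product of
Grassmannians is an additive functional `I` which (i) vanishes on homogeneous classes
whose degree differs from `dim = p·q + p'·q'`, and (ii) annihilates the relation ideal,
generated by the positive-degree elementary symmetric functions of the combined roots
of each block (expressing that `c(S ⊕ Q) = c(trivial) = 1`). -/

/-- `j`-th elementary symmetric polynomial of the first block of Chern roots. -/
noncomputable def esymBlk1 (p q p' q' : ℕ) (j : ℕ) :
    MvPolynomial ((Fin p ⊕ Fin q) ⊕ (Fin p' ⊕ Fin q')) ℤ :=
  ∑ t ∈ (Finset.univ : Finset (Fin p ⊕ Fin q)).powersetCard j, ∏ v ∈ t, X (Sum.inl v)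

/-- `j`-th elementary symmetric polynomial of the second block of Chern roots. -/
noncomputable def esymBlk2 (p q p' q' : ℕ) (j : ℕ) :
    MvPolynomial ((Fin p ⊕ Fin q) ⊕ (Fin p' ⊕ Fin q')) ℤ :=
  ∑ t ∈ (Finset.univ : Finset (Fin p' ⊕ Fin q')).powersetCard j, ∏ v ∈ t, X (Sum.inr v)

section Generic
variable {R : Type*} [CommRing R] {τ : Type*} [Fintype τ] [DecidableEq τ]

/-- Expand a product `∏ (c + f v)` into elementary symmetric pieces. -/
lemma prod_const_add_eq_sum_esymm (c : R) (f : τ → R) :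
    ∏ v : τ, (c + f v) =
      ∑ j ∈ Finset.range (Fintype.card τ + 1),
        (∑ t ∈ (Finset.univ : Finset τ).powersetCard j, ∏ v ∈ t, f v) *
          c ^ (Fintype.card τ - j) := by
  have h1 : ∀ v : τ, c + f v = f v + c := fun v => add_comm _ _
  simp_rw [h1, Finset.prod_add]
  rw [Finset.sum_powerset]
  refine Finset.sum_congr rfl fun j hj => ?_
  rw [Finset.sum_mul]
  refine Finset.sum_congr rfl fun t ht => ?_
  rw [Finset.mem_powersetCard] at ht
  rw [Finset.prod_const, Finset.card_sdiff_of_subset ht.1, ht.2, Finset.card_univ]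
end Generic

section Below
variable {σ : Type*}

/-- `Below s f`: every monomial of `f` has degree `≥ s`. -/
def Below (s : ℕ) (f : MvPolynomial σ ℤ) : Prop :=
  ∀ m : σ →₀ ℕ, m.degree < s → MvPolynomial.coeff m f = 0

lemma below_zero' (f : MvPolynomial σ ℤ) : Below 0 f := fun _ h => absurd h (Nat.not_lt_zero _)

lemma Below.mono {s t : ℕ} {f : MvPolynomial σ ℤ} (h : Below s f) (hts : t ≤ s) : Below t f :=
  fun m hm => h m (lt_of_lt_of_le hm hts)

lemma Below.add {s : ℕ} {f g : MvPolynomial σ ℤ} (hf : Below s f) (hg : Below s g) :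
    Below s (f + g) := fun m hm => by
  rw [MvPolynomial.coeff_add, hf m hm, hg m hm, add_zero]

lemma Below.neg {s : ℕ} {f : MvPolynomial σ ℤ} (hf : Below s f) : Below s (-f) :=
  fun m hm => by rw [MvPolynomial.coeff_neg, hf m hm, neg_zero]

lemma Below.sub {s : ℕ} {f g : MvPolynomial σ ℤ} (hf : Below s f) (hg : Below s g) :
    Below s (f - g) := by rw [sub_eq_add_neg]; exact hf.add hg.neg

lemma Below.mul [DecidableEq σ] {s t : ℕ} {f g : MvPolynomial σ ℤ} (hf : Below s f) (hg : Below t g) :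
    Below (s + t) (f * g) := by
  intro m hm
  rw [MvPolynomial.coeff_mul]
  refine Finset.sum_eq_zero fun x hx => ?_
  rw [Finset.HasAntidiagonal.mem_antidiagonal] at hx
  have hdeg : x.1.degree + x.2.degree = m.degree := by
    rw [← hx]; simp [Finsupp.degree_eq_weight_one, map_add]
  rcases lt_or_ge x.1.degree s with h1 | h1
  · rw [hf x.1 h1, zero_mul]
  · have : x.2.degree < t := by omega
    rw [hg x.2 this, mul_zero]

lemma Below.pow [DecidableEq σ] {f : MvPolynomial σ ℤ} (hf : Below 1 f) (n : ℕ) : Below n (f ^ n) := by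
  induction n with
  | zero => exact below_zero' _
  | succ n ih =>
    rw [pow_succ]
    have := ih.mul hf
    exact this.mono (by omega)

lemma below_one_of_constantCoeff_zero {f : MvPolynomial σ ℤ}
    (hf : MvPolynomial.constantCoeff f = 0) : Below 1 f := by
  intro m hm
  have : m.degree = 0 := Nat.lt_one_iff.mp hm
  rw [Finsupp.degree_eq_zero_iff] at this
  subst this
  exact hf

end Below

section IFun
variable {σ : Type*} [Fintype σ] [DecidableEq σ] (I : MvPolynomial σ ℤ →+ ℤ) (D : ℕ)
variable (hdeg : ∀ (f : MvPolynomial σ ℤ) (d : ℕ), f.IsHomogeneous d → d ≠ D → I f = 0)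

include hdeg in
lemma I_eq_homogeneousComponent (f : MvPolynomial σ ℤ) :
    I f = I (MvPolynomial.homogeneousComponent D f) := by
  conv_lhs => rw [← MvPolynomial.sum_homogeneousComponent f]
  rw [map_sum]
  by_cases hD : D ≤ f.totalDegree
  · rw [Finset.sum_eq_single D]
    · intro d _ hdD
      exact hdeg _ d (MvPolynomial.homogeneousComponent_isHomogeneous d f) hdD
    · intro h
      exact absurd (Finset.mem_range.mpr (Nat.lt_succ_of_le hD)) h
  · push_neg at hD
    rw [MvPolynomial.homogeneousComponent_eq_zero D f hD, map_zero]
    refine Finset.sum_eq_zero fun d hd => ?_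
    rw [Finset.mem_range] at hd
    exact hdeg _ d (MvPolynomial.homogeneousComponent_isHomogeneous d f) (by omega)

include hdeg in
lemma I_below_eq_zero {f : MvPolynomial σ ℤ} (hf : Below (D + 1) f) : I f = 0 := by
  rw [I_eq_homogeneousComponent I D hdeg f]
  have : MvPolynomial.homogeneousComponent D f = 0 := by
    ext m
    rw [MvPolynomial.coeff_homogeneousComponent, MvPolynomial.coeff_zero]
    split_ifs with h
    · exact hf m (by omega)
    · rfl
  rw [this, map_zero]

omit [Fintype σ] [DecidableEq σ] in
lemma I_span_eq_zero (S : Set (MvPolynomial σ ℤ))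
    (hS : ∀ p ∈ S, ∀ g : MvPolynomial σ ℤ, I (g * p) = 0)
    {f : MvPolynomial σ ℤ} (hf : f ∈ Ideal.span S) : I f = 0 := by
  have key : ∀ f ∈ Ideal.span S, ∀ g : MvPolynomial σ ℤ, I (g * f) = 0 := by
    intro f hf
    refine Submodule.span_induction ?_ ?_ ?_ ?_ hf
    · intro p hp g; exact hS p hp g
    · intro g; rw [mul_zero, map_zero]
    · intro a b _ _ ha hb g; rw [mul_add, map_add, ha, hb, add_zero]
    · intro a x _ hx g
      rw [smul_eq_mul, ← mul_assoc]
      exact hx (g * a)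
  have := key f hf 1
  rwa [one_mul] at this

include hdeg in
lemma I_prod_one_add_linear {τ : Type*} [Fintype τ] [DecidableEq τ]
    (ℓ : τ → MvPolynomial σ ℤ) (hℓ : ∀ t, (ℓ t).IsHomogeneous 1)
    (hcard : Fintype.card τ = D) :
    I (∏ t : τ, (1 + ℓ t)) = I (∏ t : τ, ℓ t) := by
  have h1 : ∀ t : τ, (1 : MvPolynomial σ ℤ) + ℓ t = ℓ t + 1 := fun t => add_comm _ _
  simp_rw [h1, Finset.prod_add]
  rw [map_sum, Finset.sum_eq_single Finset.univ]
  · simp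
  · intro t ht htu
    have hcard' : t.card < D := by
      rw [← hcard, ← Finset.card_univ]
      exact Finset.card_lt_card (lt_of_le_of_ne (Finset.mem_powerset.mp ht) htu)
    have hhom : ((∏ i ∈ t, ℓ i) * ∏ i ∈ Finset.univ \ t, (1 : MvPolynomial σ ℤ)).IsHomogeneous
        t.card := by
      rw [Finset.prod_const_one, mul_one]
      have := MvPolynomial.IsHomogeneous.prod t ℓ (fun _ => 1) (fun i _ => hℓ i)
      simpa using this
    exact hdeg _ t.card hhom (by omega)
  · intro h; exact absurd (Finset.mem_powerset.mpr (Finset.Subset.refl _)) h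

end IFun

lemma prod_neg'' {R : Type*} [CommRing R] {α : Type*} (t : Finset α) (f : α → R) :
    ∏ v ∈ t, (-f v) = (-1) ^ t.card * ∏ v ∈ t, f v := by
  rw [← Finset.prod_const, ← Finset.prod_mul_distrib]
  exact Finset.prod_congr rfl fun v _ => (neg_one_mul _).symm

set_option maxRecDepth 4000 in
set_option maxHeartbeats 2000000 in
theorem aux_main (k i q' : ℕ)
    (I : MvPolynomial ((Fin k ⊕ Fin i) ⊕ (Fin i ⊕ Fin q')) ℤ →+ ℤ)
    (hdeg : ∀ (f : MvPolynomial ((Fin k ⊕ Fin i) ⊕ (Fin i ⊕ Fin q')) ℤ) (d : ℕ),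
      f.IsHomogeneous d → d ≠ k * i + i * q' → I f = 0)
    (hrel1 : ∀ (f : MvPolynomial ((Fin k ⊕ Fin i) ⊕ (Fin i ⊕ Fin q')) ℤ)
      (j : ℕ), 1 ≤ j → I (f * esymBlk1 k i i q' j) = 0)
    (hrel2 : ∀ (f : MvPolynomial ((Fin k ⊕ Fin i) ⊕ (Fin i ⊕ Fin q')) ℤ)
      (j : ℕ), 1 ≤ j → I (f * esymBlk2 k i i q' j) = 0) :
    I ((∏ x : Fin k, ∏ y : Fin i,
          (X (Sum.inr (Sum.inl y)) - X (Sum.inl (Sum.inl x)))) *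
       (∏ x : Fin i, ∏ y : Fin q',
          (X (Sum.inr (Sum.inr y)) - X (Sum.inl (Sum.inr x)))))
      = I
        ((∑ t ∈ Finset.range (k * i + i * q' + 1),
            (1 - ∏ x : Fin k, ∏ y : Fin q',
              (1 + X (Sum.inr (Sum.inr y)) - X (Sum.inl (Sum.inl x)))) ^ t) *
         (∑ t ∈ Finset.range (k * i + i * q' + 1),
            (1 - ∏ x : Fin i, ∏ y : Fin i,
              (1 + X (Sum.inr (Sum.inl y)) - X (Sum.inl (Sum.inr x)))) ^ t)) := by
  set D := k * i + i * q' with hD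
  set N := i + q' with hN
  set A : MvPolynomial ((Fin k ⊕ Fin i) ⊕ (Fin i ⊕ Fin q')) ℤ := ∏ x : Fin k, ∏ y : Fin q',
      (1 + X (Sum.inr (Sum.inr y)) - X (Sum.inl (Sum.inl x))) with hA
  set B : MvPolynomial ((Fin k ⊕ Fin i) ⊕ (Fin i ⊕ Fin q')) ℤ := ∏ x : Fin i, ∏ y : Fin i,
      (1 + X (Sum.inr (Sum.inl y)) - X (Sum.inl (Sum.inr x))) with hB
  set C₁ : MvPolynomial ((Fin k ⊕ Fin i) ⊕ (Fin i ⊕ Fin q')) ℤ := ∏ x : Fin k, ∏ y : Fin i,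
      (1 + X (Sum.inr (Sum.inl y)) - X (Sum.inl (Sum.inl x))) with hC1
  set C₂ : MvPolynomial ((Fin k ⊕ Fin i) ⊕ (Fin i ⊕ Fin q')) ℤ := ∏ x : Fin i, ∏ y : Fin q',
      (1 + X (Sum.inr (Sum.inr y)) - X (Sum.inl (Sum.inr x))) with hC2
  set TA : MvPolynomial ((Fin k ⊕ Fin i) ⊕ (Fin i ⊕ Fin q')) ℤ := ∑ t ∈ Finset.range (D + 1), (1 - A) ^ t with hTAdef
  set TB : MvPolynomial ((Fin k ⊕ Fin i) ⊕ (Fin i ⊕ Fin q')) ℤ := ∑ t ∈ Finset.range (D + 1), (1 - B) ^ t with hTBdef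
  -- the relation ideal
  set SS : Set (MvPolynomial ((Fin k ⊕ Fin i) ⊕ (Fin i ⊕ Fin q')) ℤ) :=
    {p | (∃ j, 1 ≤ j ∧ p = esymBlk1 k i i q' j) ∨ (∃ j, 1 ≤ j ∧ p = esymBlk2 k i i q' j)}
    with hSS
  set 𝕀 : Ideal (MvPolynomial ((Fin k ⊕ Fin i) ⊕ (Fin i ⊕ Fin q')) ℤ) := Ideal.span SS with h𝕀
  have Izero : ∀ f ∈ 𝕀, I f = 0 := by
    intro f hf
    refine I_span_eq_zero I SS ?_ hf
    rintro p (⟨j, hj, rfl⟩ | ⟨j, hj, rfl⟩) g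
    · exact hrel1 g j hj
    · exact hrel2 g j hj
  set π := Ideal.Quotient.mk 𝕀 with hπ
  -- block 2 relation, applied factor-by-factor
  have hsplit : ∀ c : MvPolynomial ((Fin k ⊕ Fin i) ⊕ (Fin i ⊕ Fin q')) ℤ,
      π (∏ v : Fin i ⊕ Fin q', (c + X (Sum.inr v))) = (π c) ^ N := by
    intro c
    rw [prod_const_add_eq_sum_esymm, map_sum]
    have hcard : Fintype.card (Fin i ⊕ Fin q') = N := by simp [hN]
    rw [Finset.sum_eq_single 0]
    · simp [hcard]
    · intro j hj hj0
      have he : (∑ t ∈ (Finset.univ : Finset (Fin i ⊕ Fin q')).powersetCard j,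
          ∏ v ∈ t, X (Sum.inr v) : MvPolynomial ((Fin k ⊕ Fin i) ⊕ (Fin i ⊕ Fin q')) ℤ) = esymBlk2 k i i q' j := rfl
      rw [he, map_mul]
      have hmem : esymBlk2 k i i q' j ∈ 𝕀 :=
        Ideal.subset_span (Or.inr ⟨j, Nat.one_le_iff_ne_zero.mpr hj0, rfl⟩)
      rw [show π (esymBlk2 k i i q' j) = 0 from (Ideal.Quotient.eq_zero_iff_mem).mpr hmem,
        zero_mul]
    · intro h; exact absurd (Finset.mem_range.mpr (Nat.succ_pos _)) h
  -- block 1 relation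
  have hblk1 : π (∏ w : Fin k ⊕ Fin i, (1 - X (Sum.inl w) : MvPolynomial ((Fin k ⊕ Fin i) ⊕ (Fin i ⊕ Fin q')) ℤ)) = 1 := by
    have h1 : ∀ w : Fin k ⊕ Fin i,
        (1 - X (Sum.inl w) : MvPolynomial ((Fin k ⊕ Fin i) ⊕ (Fin i ⊕ Fin q')) ℤ) = 1 + (- X (Sum.inl w)) := fun w => by ring
    simp_rw [h1]
    rw [prod_const_add_eq_sum_esymm, map_sum]
    rw [Finset.sum_eq_single 0]
    · simp
    · intro j hj hj0
      have he : (∑ t ∈ (Finset.univ : Finset (Fin k ⊕ Fin i)).powersetCard j,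
          ∏ v ∈ t, (- X (Sum.inl v)) : MvPolynomial ((Fin k ⊕ Fin i) ⊕ (Fin i ⊕ Fin q')) ℤ)
          = (-1) ^ j * esymBlk1 k i i q' j := by
        rw [esymBlk1, Finset.mul_sum]
        refine Finset.sum_congr rfl fun t ht => ?_
        have hct : t.card = j := (Finset.mem_powersetCard.mp ht).2
        rw [prod_neg'', hct]
      rw [he, map_mul, map_mul]
      have hmem : esymBlk1 k i i q' j ∈ 𝕀 :=
        Ideal.subset_span (Or.inl ⟨j, Nat.one_le_iff_ne_zero.mpr hj0, rfl⟩)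
      rw [show π (esymBlk1 k i i q' j) = 0 from (Ideal.Quotient.eq_zero_iff_mem).mpr hmem]
      ring
    · intro h; exact absurd (Finset.mem_range.mpr (Nat.succ_pos _)) h
  -- rewrite the four Chern class products
  have e1 : A = ∏ x : Fin k, ∏ y : Fin q',
      ((1 - X (Sum.inl (Sum.inl x))) + X (Sum.inr (Sum.inr y)) : MvPolynomial ((Fin k ⊕ Fin i) ⊕ (Fin i ⊕ Fin q')) ℤ) := by
    rw [hA]; exact Finset.prod_congr rfl fun x _ => Finset.prod_congr rfl fun y _ => by ring
  have e2 : C₁ = ∏ x : Fin k, ∏ y : Fin i,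
      ((1 - X (Sum.inl (Sum.inl x))) + X (Sum.inr (Sum.inl y)) : MvPolynomial ((Fin k ⊕ Fin i) ⊕ (Fin i ⊕ Fin q')) ℤ) := by
    rw [hC1]; exact Finset.prod_congr rfl fun x _ => Finset.prod_congr rfl fun y _ => by ring
  have e3 : B = ∏ x : Fin i, ∏ y : Fin i,
      ((1 - X (Sum.inl (Sum.inr x))) + X (Sum.inr (Sum.inl y)) : MvPolynomial ((Fin k ⊕ Fin i) ⊕ (Fin i ⊕ Fin q')) ℤ) := by
    rw [hB]; exact Finset.prod_congr rfl fun x _ => Finset.prod_congr rfl fun y _ => by ring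
  have e4 : C₂ = ∏ x : Fin i, ∏ y : Fin q',
      ((1 - X (Sum.inl (Sum.inr x))) + X (Sum.inr (Sum.inr y)) : MvPolynomial ((Fin k ⊕ Fin i) ⊕ (Fin i ⊕ Fin q')) ℤ) := by
    rw [hC2]; exact Finset.prod_congr rfl fun x _ => Finset.prod_congr rfl fun y _ => by ring
  have hAC : A * C₁ * (B * C₂) = ∏ w : Fin k ⊕ Fin i, ∏ v : Fin i ⊕ Fin q',
      ((1 - X (Sum.inl w)) + X (Sum.inr v) : MvPolynomial ((Fin k ⊕ Fin i) ⊕ (Fin i ⊕ Fin q')) ℤ) := by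
    rw [e1, e2, e3, e4]
    simp only [Fintype.prod_sum_type, Finset.prod_mul_distrib]
    ring
  have hπABC : π (A * B * (C₁ * C₂)) = 1 := by
    have : A * B * (C₁ * C₂) = A * C₁ * (B * C₂) := by ring
    rw [this, hAC, map_prod]
    have : ∀ w : Fin k ⊕ Fin i,
        π (∏ v : Fin i ⊕ Fin q', ((1 - X (Sum.inl w)) + X (Sum.inr v) : MvPolynomial ((Fin k ⊕ Fin i) ⊕ (Fin i ⊕ Fin q')) ℤ))
          = (π (1 - X (Sum.inl w))) ^ N := fun w => hsplit _
    rw [Finset.prod_congr rfl fun w _ => this w, Finset.prod_pow, ← map_prod, hblk1, one_pow]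
  have hη : A * B * (C₁ * C₂) - 1 ∈ 𝕀 := by
    rw [← Ideal.Quotient.eq_zero_iff_mem, map_sub, map_one, hπABC, sub_self]
  -- constant coefficients
  have cA : constantCoeff A = 1 := by
    rw [hA]; simp [map_prod]
  have cB : constantCoeff B = 1 := by
    rw [hB]; simp [map_prod]
  -- geometric sums
  have hTA : TA * A = 1 - (1 - A) ^ (D + 1) := by
    have h := geom_sum_mul (1 - A) (D + 1)
    rw [hTAdef]; linear_combination -h
  have hTB : TB * B = 1 - (1 - B) ^ (D + 1) := by
    have h := geom_sum_mul (1 - B) (D + 1)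
    rw [hTBdef]; linear_combination -h
  set TAB : MvPolynomial ((Fin k ⊕ Fin i) ⊕ (Fin i ⊕ Fin q')) ℤ := ∑ t ∈ Finset.range (D + 1), (1 - A * B) ^ t with hTABdef
  have hgeo : TAB * (A * B) = 1 - (1 - A * B) ^ (D + 1) := by
    have h := geom_sum_mul (1 - A * B) (D + 1)
    rw [hTABdef]; linear_combination -h
  -- the decomposition of C₁C₂ - TA·TB
  have decomp : C₁ * C₂ - TA * TB
      = (1 - A * B) ^ (D + 1) * (C₁ * C₂ - TA * TB)
        + TAB * (A * B * (C₁ * C₂) - 1)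
        + TAB * ((1 - A) ^ (D + 1) + (1 - B) ^ (D + 1)
            - (1 - A) ^ (D + 1) * (1 - B) ^ (D + 1)) := by
    linear_combination (-(C₁ * C₂ - TA * TB)) * hgeo - (TAB * (TB * B)) * hTA
      - (TAB * (1 - (1 - A) ^ (D + 1))) * hTB
  -- Below facts
  have bA : Below 1 (1 - A) := by
    apply below_one_of_constantCoeff_zero
    rw [map_sub, map_one, cA, sub_self]
  have bB : Below 1 (1 - B) := by
    apply below_one_of_constantCoeff_zero
    rw [map_sub, map_one, cB, sub_self]
  have bAB : Below 1 (1 - A * B) := by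
    apply below_one_of_constantCoeff_zero
    rw [map_sub, map_one, map_mul, cA, cB, mul_one, sub_self]
  have hz : I (C₁ * C₂ - TA * TB) = 0 := by
    rw [decomp, map_add, map_add]
    have t1 : I ((1 - A * B) ^ (D + 1) * (C₁ * C₂ - TA * TB)) = 0 := by
      apply I_below_eq_zero I D hdeg
      have := (bAB.pow (D + 1)).mul (below_zero' (C₁ * C₂ - TA * TB))
      exact this.mono (by omega)
    have t2 : I (TAB * (A * B * (C₁ * C₂) - 1)) = 0 :=
      Izero _ (Ideal.mul_mem_left _ _ hη)
    have t3 : I (TAB * ((1 - A) ^ (D + 1) + (1 - B) ^ (D + 1)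
        - (1 - A) ^ (D + 1) * (1 - B) ^ (D + 1))) = 0 := by
      apply I_below_eq_zero I D hdeg
      have hw : Below (D + 1) ((1 - A) ^ (D + 1) + (1 - B) ^ (D + 1)
          - (1 - A) ^ (D + 1) * (1 - B) ^ (D + 1)) := by
        refine ((bA.pow (D + 1)).add (bB.pow (D + 1))).sub ?_
        exact (((bA.pow (D + 1)).mul (bB.pow (D + 1)))).mono (by omega)
      have := (below_zero' TAB).mul hw
      exact this.mono (by omega)
    rw [t1, t2, t3]; ring
  -- Step 1: the top Chern class is the degree-D part of C₁C₂
  set τ := (Fin k × Fin i) ⊕ (Fin i × Fin q') with hτ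
  set ℓ : τ → MvPolynomial ((Fin k ⊕ Fin i) ⊕ (Fin i ⊕ Fin q')) ℤ :=
    Sum.elim (fun p => X (Sum.inr (Sum.inl p.2)) - X (Sum.inl (Sum.inl p.1)))
      (fun p => X (Sum.inr (Sum.inr p.2)) - X (Sum.inl (Sum.inr p.1))) with hℓ
  have hℓhom : ∀ t : τ, (ℓ t).IsHomogeneous 1 := by
    rintro (⟨x, y⟩ | ⟨x, y⟩) <;>
      exact (MvPolynomial.isHomogeneous_X _ _).sub (MvPolynomial.isHomogeneous_X _ _)
  have hcardτ : Fintype.card τ = D := by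
    simp [hτ, hD]
  have hLprod : (∏ x : Fin k, ∏ y : Fin i,
        (X (Sum.inr (Sum.inl y)) - X (Sum.inl (Sum.inl x)) : MvPolynomial ((Fin k ⊕ Fin i) ⊕ (Fin i ⊕ Fin q')) ℤ)) *
      (∏ x : Fin i, ∏ y : Fin q',
        (X (Sum.inr (Sum.inr y)) - X (Sum.inl (Sum.inr x)) : MvPolynomial ((Fin k ⊕ Fin i) ⊕ (Fin i ⊕ Fin q')) ℤ))
      = ∏ t : τ, ℓ t := by
    rw [Fintype.prod_sum_type]
    simp only [hℓ, Sum.elim_inl, Sum.elim_inr, Fintype.prod_prod_type]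
  have hCprod : C₁ * C₂ = ∏ t : τ, (1 + ℓ t) := by
    rw [hC1, hC2, Fintype.prod_sum_type]
    simp only [hℓ, Sum.elim_inl, Sum.elim_inr, Fintype.prod_prod_type]
    refine congrArg₂ (· * ·) ?_ ?_ <;>
      exact Finset.prod_congr rfl fun x _ => Finset.prod_congr rfl fun y _ => by ring
  have step1 : I ((∏ x : Fin k, ∏ y : Fin i,
        (X (Sum.inr (Sum.inl y)) - X (Sum.inl (Sum.inl x)) : MvPolynomial ((Fin k ⊕ Fin i) ⊕ (Fin i ⊕ Fin q')) ℤ)) *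
      (∏ x : Fin i, ∏ y : Fin q',
        (X (Sum.inr (Sum.inr y)) - X (Sum.inl (Sum.inr x)) : MvPolynomial ((Fin k ⊕ Fin i) ⊕ (Fin i ⊕ Fin q')) ℤ)))
      = I (C₁ * C₂) := by
    rw [hLprod, hCprod, I_prod_one_add_linear I D hdeg ℓ hℓhom hcardτ]
  rw [step1]
  have := map_sub I (C₁ * C₂) (TA * TB)
  rw [hz] at this
  omega

/-- Over `G(k, k+i) × G(i, m-n+k+i)`, the integral of
`c_top(S₁^∨ ⊗ S₂) · c_top(Q₁^∨ ⊗ Q₂)` equals the integral of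
`c(S₁^∨ ⊗ Q₂)⁻¹ · c(Q₁^∨ ⊗ S₂)⁻¹`.  Here `S₁` (rank `k`) and `Q₁` (rank `i`) are the
universal bundles on `G(k,k+i)`, with Chern roots `s₁, q₁`, and `S₂` (rank `i`),
`Q₂` (rank `m-n+k`) those on `G(i, m-n+k+i)`, with Chern roots `s₂, q₂`; the inverse
total Chern classes are represented by their truncations
`∑_{t ≤ D} (1 - c(·))^t` (`D = k·i + i·(m-n+k)` being the dimension), whose terms of
degree `≤ D` agree with those of the inverse. -/
theorem euler_obstruction_two_integral_formulas
    (m n k i : ℕ) (hmn : n ≤ m) (hn : 1 ≤ n) (hk : k ≤ n - 1)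
    (I : MvPolynomial ((Fin k ⊕ Fin i) ⊕ (Fin i ⊕ Fin (m - n + k))) ℤ →+ ℤ)
    (hdeg : ∀ (f : MvPolynomial ((Fin k ⊕ Fin i) ⊕ (Fin i ⊕ Fin (m - n + k))) ℤ) (d : ℕ),
      f.IsHomogeneous d → d ≠ k * i + i * (m - n + k) → I f = 0)
    (hrel1 : ∀ (f : MvPolynomial ((Fin k ⊕ Fin i) ⊕ (Fin i ⊕ Fin (m - n + k))) ℤ)
      (j : ℕ), 1 ≤ j → I (f * esymBlk1 k i i (m - n + k) j) = 0)
    (hrel2 : ∀ (f : MvPolynomial ((Fin k ⊕ Fin i) ⊕ (Fin i ⊕ Fin (m - n + k))) ℤ)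
      (j : ℕ), 1 ≤ j → I (f * esymBlk2 k i i (m - n + k) j) = 0) :
    I ((∏ x : Fin k, ∏ y : Fin i,
          (X (Sum.inr (Sum.inl y)) - X (Sum.inl (Sum.inl x)))) *
       (∏ x : Fin i, ∏ y : Fin (m - n + k),
          (X (Sum.inr (Sum.inr y)) - X (Sum.inl (Sum.inr x)))))
      = I
        ((∑ t ∈ Finset.range (k * i + i * (m - n + k) + 1),
            (1 - ∏ x : Fin k, ∏ y : Fin (m - n + k),
              (1 + X (Sum.inr (Sum.inr y)) - X (Sum.inl (Sum.inl x)))) ^ t) *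
         (∑ t ∈ Finset.range (k * i + i * (m - n + k) + 1),
            (1 - ∏ x : Fin i, ∏ y : Fin i,
              (1 + X (Sum.inr (Sum.inl y)) - X (Sum.inl (Sum.inr x)))) ^ t)) := by
  exact aux_main k i (m - n + k) I hdeg hrel1 hrel2
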